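/- For k ≥ 4 and n ≥ k+1, f(n,k) ≤ t(n,k) − 1, i.e., the Turán graph T(n,k−1) itself has a degree-monotone path on at least k+1 vertices. -/

import Mathlib

open SimpleGraph

/-- Degree of a vertex (as `ncard` of the neighbor set, avoiding decidability). -/
noncomputable def gdeg {V : Type*} (G : SimpleGraph V) (v : V) : ℕ := (G.neighborSet v).ncard

/-- A walk is degree-monotone if the degrees along its support are monotone. -/
def DegMonotone {V : Type*} (G : SimpleGraph V) {u v : V} (p : G.Walk u v) : Prop :=
  List.Chain' (· ≤ ·) (p.support.map (gdeg G)) ∨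
  List.Chain' (fun a b => b ≤ a) (p.support.map (gdeg G))

/-- `mp G`: the maximum number of vertices on a degree-monotone path of `G`. -/
noncomputable def mp {V : Type*} [Fintype V] (G : SimpleGraph V) : ℕ :=
  sSup {n | ∃ (u v : V) (p : G.Walk u v), p.IsPath ∧ DegMonotone G p ∧ p.support.length = n}

/-- The Turán number `t(n,k)`: the maximum number of edges of a `K_k`-free graph
on `n` vertices. -/
noncomputable def turanNum (n k : ℕ) : ℕ :=
  sSup {m | ∃ G : SimpleGraph (Fin n), G.CliqueFree k ∧ G.edgeSet.ncard = m}

/-- `f(n,k)`: the maximum number of edges of a graph on `n` vertices with no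
degree-monotone path on `k` vertices. -/
noncomputable def mpEx (n k : ℕ) : ℕ :=
  sSup {m | ∃ G : SimpleGraph (Fin n), mp G < k ∧ G.edgeSet.ncard = m}

/-! ### Generic auxiliary lemmas about `mp` -/

section aux
variable {V W : Type*} {G : SimpleGraph V} {H : SimpleGraph W}

lemma mp_set_bddAbove [Fintype V] (G : SimpleGraph V) :
    BddAbove {n | ∃ (u v : V) (p : G.Walk u v),
      p.IsPath ∧ DegMonotone G p ∧ p.support.length = n} := by
  refine ⟨Fintype.card V, ?_⟩
  rintro m ⟨u, v, p, hp, -, rfl⟩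
  exact ((Walk.isPath_def p).mp hp).length_le_card

lemma le_mp [Fintype V] {m : ℕ} {u v : V} {p : G.Walk u v} (hp : p.IsPath)
    (hd : DegMonotone G p) (hl : p.support.length = m) : m ≤ mp G :=
  le_csSup (mp_set_bddAbove G) ⟨u, v, p, hp, hd, hl⟩

lemma exists_walk_of_chain (G : SimpleGraph V) :
    ∀ (l : List V) (a : V), List.Chain G.Adj a l →
      ∃ (v : V) (p : G.Walk a v), p.support = a :: l := by
  intro l
  induction l with
  | nil => exact fun a _ => ⟨a, Walk.nil, rfl⟩
  | cons b l ih =>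
    intro a h
    rw [List.Chain, List.isChain_cons_cons] at h
    obtain ⟨v, p, hp⟩ := ih b h.2
    exact ⟨v, Walk.cons h.1 p, by simp [hp]⟩

lemma gdeg_iso (e : G ≃g H) (v : V) : gdeg H (e v) = gdeg G v := by
  rw [gdeg, gdeg, ← Nat.card_coe_set_eq, ← Nat.card_coe_set_eq]
  exact Nat.card_congr (e.mapNeighborSet v).symm

lemma mp_le_of_iso [Fintype V] [Fintype W] (e : G ≃g H) : mp G ≤ mp H := by
  rw [mp]
  rcases Set.eq_empty_or_nonempty
      {n | ∃ (u v : V) (p : G.Walk u v),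
        p.IsPath ∧ DegMonotone G p ∧ p.support.length = n} with hS | hS
  · rw [hS, csSup_empty]; exact Nat.zero_le _
  refine csSup_le hS ?_
  rintro m ⟨u, v, p, hp, hd, rfl⟩
  have hinj : Function.Injective (e.toHom) := e.injective
  refine le_mp (Walk.map_isPath_of_injective hinj hp) ?_ ?_
  · have hmap : (p.map e.toHom).support.map (gdeg H) = p.support.map (gdeg G) := by
      rw [Walk.support_map, List.map_map]
      exact List.map_congr_left fun x _ => gdeg_iso e x
    rw [DegMonotone, hmap]
    exact hd
  · rw [Walk.support_map, List.length_map]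

/-- A clique on `k` vertices yields a degree-monotone path on `k` vertices. -/
lemma le_mp_of_isNClique [Fintype V] {k : ℕ} {s : Finset V} (hk : 0 < k)
    (h : G.IsNClique k s) : k ≤ mp G := by
  classical
  obtain ⟨l, hnd, hadj, hsort, hlen⟩ :
      ∃ (l : List V), l.Nodup ∧ l.Pairwise G.Adj ∧
        l.Pairwise (fun a b => gdeg G a ≤ gdeg G b) ∧ l.length = k := by
    set r : V → V → Prop := fun a b => gdeg G a ≤ gdeg G b with hr
    have : DecidableRel r := fun a b => Nat.decLe _ _
    have htot : IsTotal V r := ⟨fun a b => Nat.le_total _ _⟩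
    have htrans : IsTrans V r := ⟨fun a b c => Nat.le_trans⟩
    set l := List.insertionSort r s.toList with hl
    have hperm : l.Perm s.toList := List.perm_insertionSort r s.toList
    have hnd : l.Nodup := hperm.nodup_iff.mpr s.nodup_toList
    refine ⟨l, hnd, ?_, List.pairwise_insertionSort r s.toList, ?_⟩
    · refine hnd.pairwise_of_set_pairwise ?_
      have : {x | x ∈ l} = (s : Set V) := by
        ext x; simp [hperm.mem_iff]
      rw [this]
      exact h.1
    · rw [hperm.length_eq, Finset.length_toList, h.2]
  cases l with
  | nil => simp at hlen; omega
  | cons a t =>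
    have hchain : List.Chain G.Adj a t := hadj.isChain
    obtain ⟨v, p, hsup⟩ := exists_walk_of_chain G t a hchain
    refine le_mp (p := p) ?_ (Or.inl ?_) ?_
    · rw [Walk.isPath_def, hsup]; exact hnd
    · rw [hsup]
      exact (List.pairwise_map.mpr hsort).isChain
    · rw [hsup]; exact hlen

lemma cliqueFree_of_mp_lt [Fintype V] {k : ℕ} (h : mp G < k) : G.CliqueFree k := by
  intro s hs
  have hk : 0 < k := by omega
  exact absurd (le_mp_of_isNClique hk hs) (by omega)

end aux

/-! ### Degrees in the Turán graph -/

/-- The degree in `turanGraph n r` of a vertex with value congruent to `c` mod `r`. -/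
def tD (n r c : ℕ) : ℕ := n - (n / r + if c % r < n % r then 1 else 0)

lemma tD_mono {n r c c' : ℕ} (h : c % r ≤ c' % r) : tD n r c ≤ tD n r c' := by
  unfold tD
  have : (if c' % r < n % r then 1 else 0) ≤ (if c % r < n % r then 1 else 0) := by
    split_ifs <;> omega
  omega

lemma card_fin_filter (n : ℕ) (p : ℕ → Prop) [DecidablePred p] :
    (Finset.univ.filter (fun w : Fin n => p w.val)).card = ((Finset.range n).filter p).card := by
  rw [Finset.card_filter, Finset.card_filter,
    Fin.sum_univ_eq_sum_range (fun i => if p i then 1 else 0)]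

lemma gdeg_eq_degree {V : Type*} [Fintype V] (G : SimpleGraph V) [DecidableRel G.Adj] (v : V) :
    gdeg G v = G.degree v := by
  rw [gdeg, degree, neighborFinset, Set.ncard_eq_toFinset_card']

lemma gdeg_turan {n r : ℕ} (hr : 0 < r) (v : Fin n) :
    gdeg (turanGraph n r) v = tD n r v.val := by
  classical
  rw [gdeg_eq_degree]
  have hsplit := Finset.card_filter_add_card_filter_not
    (s := (Finset.univ : Finset (Fin n))) (p := fun w : Fin n => (turanGraph n r).Adj v w)
  have hdeg : (turanGraph n r).degree v
      = (Finset.univ.filter (fun w : Fin n => (turanGraph n r).Adj v w)).card := by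
    rw [degree, neighborFinset_eq_filter]
  have hcompl : (Finset.univ.filter (fun w : Fin n => ¬ (turanGraph n r).Adj v w))
      = (Finset.univ.filter (fun w : Fin n => (w : ℕ) ≡ v.val [MOD r])) := by
    apply Finset.filter_congr
    intro w _
    simp only [turanGraph, not_not, Nat.ModEq, eq_comm]
  have hcount : (Finset.univ.filter (fun w : Fin n => (w : ℕ) ≡ v.val [MOD r])).card
      = n / r + if v.val % r < n % r then 1 else 0 := by
    rw [card_fin_filter n (fun x => x ≡ v.val [MOD r]), ← Nat.count_eq_card_filter_range,
      Nat.count_modEq_card n hr]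
  rw [hcompl, hcount] at hsplit
  rw [hdeg, tD]
  simp only [Finset.card_univ, Fintype.card_fin] at hsplit
  omega

/-! ### Concrete degree-monotone paths in the Turán graph -/

lemma chain'_lt_range' (r s m : ℕ) (h : s + m ≤ r) :
    List.Chain' (fun a b => a < b ∧ b < r) (List.range' s m) := by
  induction m generalizing s with
  | zero => exact List.isChain_nil
  | succ m ih =>
    rw [List.range'_succ]
    cases m with
    | zero => exact List.isChain_singleton _
    | succ m' =>
      rw [List.range'_succ, List.Chain', List.isChain_cons_cons]
      exact ⟨by omega, by rw [← List.range'_succ]; exact ih (s + 1) (by omega)⟩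

section lists
variable {n r : ℕ}

/-- The vertex list used when `n % r ≠ 1`. -/
def listA (r : ℕ) : List ℕ := 0 :: 1 :: r :: List.range' 2 (r - 2)

/-- The vertex list used when `n % r = 1`. -/
def listB (r : ℕ) : List ℕ := List.range' 0 r ++ [r + 1]

lemma listA_length (hr : 3 ≤ r) : (listA r).length = r + 1 := by
  simp [listA]; omega

lemma listB_length : (listB r).length = r + 1 := by simp [listB]

lemma listA_lt (hr : 3 ≤ r) (hn : r + 2 ≤ n) : ∀ x ∈ listA r, x < n := by
  intro x hx
  simp [listA, List.mem_range'_1] at hx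
  omega

lemma listB_lt (hn : r + 2 ≤ n) : ∀ x ∈ listB r, x < n := by
  intro x hx
  simp [listB, List.mem_range'_1] at hx
  omega

lemma listA_nodup (hr : 3 ≤ r) : (listA r).Nodup := by
  simp [listA, List.nodup_cons, List.mem_range'_1, List.nodup_range']
  omega

lemma listB_nodup : (listB r).Nodup := by
  rw [listB, List.nodup_append]
  refine ⟨List.nodup_range', List.nodup_singleton _, ?_⟩
  simp [List.disjoint_singleton, List.mem_range'_1]
  omega

lemma listA_chain (hr : 3 ≤ r) :
    (listA r).Chain' (fun a b => a % r ≠ b % r) := by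
  have h2 : List.range' 2 (r - 2) = 2 :: List.range' 3 (r - 3) := by
    rw [show r - 2 = (r - 3) + 1 by omega, List.range'_succ]
  rw [listA, List.Chain', List.isChain_cons_cons, List.isChain_cons_cons, h2, List.isChain_cons_cons]
  refine ⟨?_, ?_, ?_, ?_⟩
  · simp [Nat.mod_eq_of_lt, hr]; omega
  · simp [Nat.mod_eq_of_lt (show 1 < r by omega), Nat.mod_self]
  · rw [Nat.mod_self, Nat.mod_eq_of_lt (show 2 < r by omega)]; omega
  · rw [← h2]
    refine (chain'_lt_range' r 2 (r-2) (by omega)).imp ?_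
    intro a b ⟨hab, hbr⟩
    rw [Nat.mod_eq_of_lt (by omega), Nat.mod_eq_of_lt hbr]
    omega

lemma listB_chain (hr : 3 ≤ r) :
    (listB r).Chain' (fun a b => a % r ≠ b % r) := by
  rw [listB, List.Chain', List.isChain_append]
  refine ⟨?_, by simp, ?_⟩
  · refine (chain'_lt_range' r 0 r (by omega)).imp ?_
    intro a b ⟨hab, hbr⟩
    rw [Nat.mod_eq_of_lt (by omega), Nat.mod_eq_of_lt hbr]
    omega
  · obtain ⟨m, rfl⟩ : ∃ m, r = m + 1 := ⟨r - 1, by omega⟩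
    intro x hx y hy
    rw [List.range'_concat, List.getLast?_concat] at hx
    simp at hx hy
    subst hx; subst hy
    rw [Nat.mod_eq_of_lt (by omega), Nat.add_mod_left, Nat.mod_eq_of_lt (by omega)]
    omega

lemma listA_deg (hr : 3 ≤ r) (hrem : n % r ≠ 1) :
    ((listA r).map (tD n r)).Chain' (· ≤ ·) := by
  have h01 : tD n r 0 = tD n r 1 := by
    unfold tD
    rw [Nat.zero_mod, Nat.mod_eq_of_lt (show 1 < r by omega)]
    split_ifs <;> omega
  have h0r : tD n r r = tD n r 0 := by
    unfold tD; rw [Nat.mod_self, Nat.zero_mod]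
  have h2 : List.range' 2 (r - 2) = 2 :: List.range' 3 (r - 3) := by
    rw [show r - 2 = (r - 3) + 1 by omega, List.range'_succ]
  rw [listA, h2]
  simp only [List.map_cons, List.Chain', List.isChain_cons_cons]
  refine ⟨h01.le, (h0r ▸ h01).ge, ?_, ?_⟩
  · rw [h0r]
    exact tD_mono (by simp [Nat.mod_eq_of_lt (show 2 < r by omega)])
  · rw [← List.map_cons, ← h2, List.isChain_map]
    refine (chain'_lt_range' r 2 (r-2) (by omega)).imp ?_
    intro a b ⟨hab, hbr⟩
    exact tD_mono (by rw [Nat.mod_eq_of_lt (by omega), Nat.mod_eq_of_lt hbr]; omega)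

lemma listB_deg (hr : 3 ≤ r) (hrem : n % r = 1) :
    ((listB r).map (tD n r)).Chain' (· ≤ ·) := by
  rw [listB, List.map_append, List.Chain', List.isChain_append]
  refine ⟨?_, by simp, ?_⟩
  · rw [List.isChain_map]
    refine (chain'_lt_range' r 0 r (by omega)).imp ?_
    intro a b ⟨hab, hbr⟩
    exact tD_mono (by rw [Nat.mod_eq_of_lt (by omega), Nat.mod_eq_of_lt hbr]; omega)
  · obtain ⟨m, rfl⟩ : ∃ m, r = m + 1 := ⟨r - 1, by omega⟩
    intro x hx y hy
    rw [List.range'_concat] at hx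
    simp only [List.map_append, List.map_cons, List.map_nil, List.getLast?_concat] at hx
    simp at hx hy
    subst hx; subst hy
    have h1 : tD n (m+1) m = tD n (m+1) (m+1+1) := by
      unfold tD
      rw [hrem, Nat.add_mod_left, Nat.mod_eq_of_lt (show m < m + 1 by omega),
        Nat.mod_eq_of_lt (show 1 < m + 1 by omega)]
      have h2 : ¬ (m < 1) := by omega
      simp [h2]
    exact h1.le

end lists

/-- A list of natural numbers below `n`, with no duplicates, consecutive entries in
different residue classes mod `r`, and nondecreasing `tD`-values, gives a
degree-monotone path in the Turán graph. -/
lemma le_mp_turan {n r : ℕ} (hr : 0 < r) (lnat : List ℕ) (hlt : ∀ x ∈ lnat, x < n)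
    (hnd : lnat.Nodup) (hch : lnat.Chain' (fun a b => a % r ≠ b % r))
    (hmono : (lnat.map (tD n r)).Chain' (· ≤ ·)) :
    lnat.length ≤ mp (turanGraph n r) := by
  set l : List (Fin n) := lnat.pmap (fun x h => (⟨x, h⟩ : Fin n)) hlt with hldef
  have hval : l.map Fin.val = lnat := by
    rw [hldef, List.map_pmap]
    exact (List.pmap_eq_map (f := id) _).trans (List.map_id _)
  have hlnodup : l.Nodup := List.Nodup.of_map Fin.val (hval ▸ hnd)
  have hlchain : List.Chain' (turanGraph n r).Adj l := by
    have hch' := hch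
    rw [← hval, List.Chain', List.isChain_map] at hch'
    exact hch'
  have hdeg : l.map (gdeg (turanGraph n r)) = lnat.map (tD n r) := by
    rw [hldef, List.map_pmap]
    have heq : List.pmap (fun (a : ℕ) (h : a < n) => gdeg (turanGraph n r) ⟨a, h⟩) lnat hlt
        = List.pmap (fun (a : ℕ) (_ : a < n) => tD n r a) lnat hlt :=
      List.pmap_congr_left lnat (fun a _ h₁ _ => by rw [gdeg_turan hr])
    rw [heq, List.pmap_eq_map]
  have hlen : l.length = lnat.length := by rw [hldef, List.length_pmap]
  cases hl : l with
  | nil => rw [hl] at hlen; rw [← hlen]; simp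
  | cons a t =>
    rw [hl] at hlchain
    obtain ⟨v, p, hsup⟩ := exists_walk_of_chain (turanGraph n r) t a hlchain
    refine le_mp (p := p) ?_ (Or.inl ?_) ?_
    · rw [Walk.isPath_def, hsup, ← hl]; exact hlnodup
    · rw [hsup, ← hl, hdeg]; exact hmono
    · rw [hsup, ← hl, hlen]

/-- The Turán graph `T(n, k-1)` has a degree-monotone path on `k` vertices
whenever `4 ≤ k` and `k + 1 ≤ n`. -/
lemma k_le_mp_turan {n k : ℕ} (hk : 4 ≤ k) (hn : k + 1 ≤ n) :
    k ≤ mp (turanGraph n (k - 1)) := by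
  set r := k - 1 with hrdef
  have hr3 : 3 ≤ r := by omega
  have hn' : r + 2 ≤ n := by omega
  by_cases hrem : n % r = 1
  · have := le_mp_turan (show 0 < r by omega) (listB r) (listB_lt hn') listB_nodup
      (listB_chain hr3) (listB_deg hr3 hrem)
    rw [listB_length] at this
    omega
  · have := le_mp_turan (show 0 < r by omega) (listA r) (listA_lt hr3 hn') (listA_nodup hr3)
      (listA_chain hr3) (listA_deg hr3 hrem)
    rw [listA_length hr3] at this
    omega

lemma ncard_edgeSet_eq {V : Type*} [Fintype V] (G : SimpleGraph V) [DecidableRel G.Adj] :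
    G.edgeSet.ncard = G.edgeFinset.card := by
  rw [← coe_edgeFinset, Set.ncard_coe_finset]

/-- For `k ≥ 4` and `n ≥ k + 1`, `f(n,k) ≤ t(n,k) − 1`. -/
theorem mpEx_le_turanNum_sub_one (n k : ℕ) (hk : 4 ≤ k) (hn : k + 1 ≤ n) :
    mpEx n k ≤ turanNum n k - 1 := by
  classical
  rw [mpEx]
  rcases Set.eq_empty_or_nonempty
      {m | ∃ G : SimpleGraph (Fin n), mp G < k ∧ G.edgeSet.ncard = m} with hS | hS
  · rw [hS, csSup_empty]; exact Nat.zero_le _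
  refine csSup_le hS ?_
  rintro m ⟨G, hmp, rfl⟩
  have hcf : G.CliqueFree k := cliqueFree_of_mp_lt hmp
  have hbddT : BddAbove {m | ∃ G : SimpleGraph (Fin n), G.CliqueFree k ∧ G.edgeSet.ncard = m} := by
    refine ⟨(Set.univ : Set (Sym2 (Fin n))).ncard, ?_⟩
    rintro m ⟨G, -, rfl⟩
    exact Set.ncard_le_ncard (Set.subset_univ _) Set.finite_univ
  have hle : G.edgeSet.ncard ≤ turanNum n k := le_csSup hbddT ⟨G, hcf, rfl⟩
  rcases lt_or_eq_of_le hle with hlt | heq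
  · omega
  · exfalso
    haveI : DecidableRel G.Adj := Classical.decRel _
    have hTM : G.IsTuranMaximal (k - 1) := by
      constructor
      · rwa [show k - 1 + 1 = k by omega]
      · intro H _ hH
        have hHk : H.CliqueFree k := by rwa [show k - 1 + 1 = k by omega] at hH
        have hHle : H.edgeSet.ncard ≤ turanNum n k := le_csSup hbddT ⟨H, hHk, rfl⟩
        rw [← heq] at hHle
        calc H.edgeFinset.card = H.edgeSet.ncard := (ncard_edgeSet_eq H).symm
          _ ≤ G.edgeSet.ncard := hHle
          _ = G.edgeFinset.card := ncard_edgeSet_eq G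
    obtain ⟨e⟩ := (isTuranMaximal_iff_nonempty_iso_turanGraph (show 0 < k - 1 by omega)).mp hTM
    have hmp2 : k ≤ mp (turanGraph (Fintype.card (Fin n)) (k - 1)) :=
      k_le_mp_turan hk (by rw [Fintype.card_fin]; exact hn)
    have hiso := mp_le_of_iso e.symm
    omega
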